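/- Let p be an odd prime, q a prime power, and a ≥ 1 an integer such that p^a divides q − 1 but p^{a+1} does not divide q − 1. Let F be the field with q elements, K an algebraic closure of F, and let ξ ∈ Kˣ be an element of multiplicative order p^e for some integer e ≥ 0. Then the degree of the minimal polynomial of ξ over F equals p^{e−a} if e > a, and equals 1 if e ≤ a. -/
import Mathlib

open Polynomial IntermediateField

private lemma nt_lemma (p : ℕ) (hp : p.Prime) (hodd : Odd p) (q a : ℕ) (ha : 1 ≤ a)
    (hq1 : 1 < q) (hdvd : p ^ a ∣ q - 1) (hndvd : ¬ p ^ (a + 1) ∣ q - 1)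
    (e : ℕ) : ∀ n : ℕ, n ≠ 0 →
      (p ^ e ∣ q ^ n - 1 ↔ (if a < e then p ^ (e - a) else 1) ∣ n) := by
  intro n hn
  haveI : Fact p.Prime := ⟨hp⟩
  have hq0 : q - 1 ≠ 0 := by omega
  have hpq1 : p ∣ q - 1 := dvd_trans (dvd_pow_self p (by omega : a ≠ 0)) hdvd
  have hpq : ¬ p ∣ q := by
    intro h
    have : p ∣ q - (q - 1) := Nat.dvd_sub h hpq1
    rw [show q - (q-1) = 1 by omega] at this
    exact hp.one_lt.ne' (Nat.eq_one_of_dvd_one this)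
  have hfa : (q - 1).factorization p = a := by
    have h1 : a ≤ (q - 1).factorization p :=
      (Nat.Prime.pow_dvd_iff_le_factorization hp hq0).mp hdvd
    have h2 : ¬ (a + 1 ≤ (q - 1).factorization p) := fun h =>
      hndvd ((Nat.Prime.pow_dvd_iff_le_factorization hp hq0).mpr h)
    omega
  have hqn0 : q ^ n - 1 ≠ 0 := by
    have : 1 < q ^ n := Nat.one_lt_pow hn hq1
    omega
  have hlte : (q ^ n - 1).factorization p = a + n.factorization p := by
    have := padicValNat.pow_sub_pow (p := p) hodd (x := q) (y := 1) hq1 (by simpa using hpq1)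
      hpq hn
    rw [one_pow] at this
    rw [Nat.factorization_def _ hp, Nat.factorization_def _ hp, this,
      ← Nat.factorization_def _ hp, hfa]
  rw [Nat.Prime.pow_dvd_iff_le_factorization hp hqn0, hlte]
  split_ifs with hae
  · rw [Nat.Prime.pow_dvd_iff_le_factorization hp hn]
    omega
  · simp; omega

/-- Let `p` be an odd prime, `q` a prime power with `p^a ∥ q - 1` (exact power,
`a ≥ 1`), `F` the field with `q` elements and `K` an algebraic closure of `F`.
If `ξ ∈ Kˣ` has multiplicative order `p^e`, then the degree of the minimal
polynomial of `ξ` over `F` is `p^(e-a)` if `e > a`, and `1` if `e ≤ a`. -/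
theorem minpoly_degree_of_p_power_order_element
    (p : ℕ) (hp : p.Prime) (hodd : Odd p)
    (q a : ℕ) (ha : 1 ≤ a)
    (F : Type*) [Field F] [Fintype F] (hq : Fintype.card F = q)
    (hdvd : p ^ a ∣ q - 1) (hndvd : ¬ p ^ (a + 1) ∣ q - 1)
    (K : Type*) [Field K] [Algebra F K] [IsAlgClosure F K]
    (ξ : Kˣ) (e : ℕ) (hξ : orderOf ξ = p ^ e) :
    (minpoly F (ξ : K)).natDegree = if a < e then p ^ (e - a) else 1 := by
  classical
  have hq1 : 1 < q := hq ▸ Fintype.one_lt_card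
  haveI : Algebra.IsAlgebraic F K := IsAlgClosure.isAlgebraic
  have hint : IsIntegral F (ξ : K) := Algebra.IsIntegral.isIntegral _
  set d := (minpoly F (ξ : K)).natDegree with hd
  have hd0 : d ≠ 0 := (minpoly.natDegree_pos hint).ne'
  -- the intermediate field F(ξ)
  set E := F⟮(ξ : K)⟯ with hE
  haveI : FiniteDimensional F E := IntermediateField.adjoin.finiteDimensional hint
  have hfr : Module.finrank F E = d := IntermediateField.adjoin.finrank hint
  haveI : Finite E := Module.finite_of_finite F
  haveI : Fintype E := Fintype.ofFinite E
  have cardE : Fintype.card E = q ^ d := by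
    rw [Module.card_eq_pow_finrank (K := F), hq, hfr]
  -- every element of E satisfies x ^ (q ^ d) = x; in particular ξ
  -- fact1 : p ^ e ∣ q ^ d - 1
  have fact1 : p ^ e ∣ q ^ d - 1 := by
    rw [← hξ, ← orderOf_units]
    apply orderOf_dvd_of_pow_eq_one
    have hξE : (ξ : K) ∈ E := IntermediateField.mem_adjoin_simple_self F _
    have hne : (⟨(ξ : K), hξE⟩ : E) ≠ 0 := by
      simp [Subtype.ext_iff, Units.ne_zero ξ]
    have := FiniteField.pow_card_sub_one_eq_one (⟨(ξ : K), hξE⟩ : E) hne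
    rw [cardE] at this
    have := congrArg (Subtype.val) this
    push_cast at this
    exact this
  -- fact2 : minimality
  have fact2 : ∀ n : ℕ, n ≠ 0 → p ^ e ∣ q ^ n - 1 → d ≤ n := by
    intro n hn hdvdn
    -- ξ ^ (q ^ n) = ξ
    have hxi : (ξ : K) ^ q ^ n = (ξ : K) := by
      have h1 : ξ ^ (q ^ n - 1) = 1 := by
        apply orderOf_dvd_iff_pow_eq_one.mp
        rw [hξ]; exact hdvdn
      have h1' : (ξ : K) ^ (q ^ n - 1) = 1 := by
        have := congrArg Units.val h1
        rwa [Units.val_pow_eq_pow_val, Units.val_one] at this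
      have hpos : 1 ≤ q ^ n := Nat.one_le_pow _ _ (by omega)
      calc (ξ : K) ^ q ^ n = (ξ : K) ^ (q ^ n - 1 + 1) := by rw [Nat.sub_add_cancel hpos]
        _ = (ξ : K) := by rw [pow_succ, h1', one_mul]
    -- the subfield of elements fixed by x ↦ x ^ (q ^ n)
    obtain ⟨r, hchar⟩ := CharP.exists F
    haveI : CharP F r := hchar
    obtain ⟨s, hrp, hcard⟩ := FiniteField.card F r
    haveI : CharP K r := charP_of_injective_algebraMap (algebraMap F K).injective r
    haveI : Fact r.Prime := ⟨hrp⟩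
    haveI : ExpChar K r := ExpChar.prime hrp
    have hqr : q = r ^ (s : ℕ) := hq ▸ hcard
    set φ := iterateFrobenius K r (s * n) with hφ
    have hφdef : ∀ x : K, φ x = x ^ q ^ n := by
      intro x
      rw [hφ, iterateFrobenius_def, hqr, ← pow_mul]
    -- intermediate field of fixed points
    let S : IntermediateField F K :=
      { carrier := {x : K | x ^ q ^ n = x}
        mul_mem' := fun {x y} hx hy => by
          simp only [Set.mem_setOf_eq] at *
          rw [mul_pow, hx, hy]
        one_mem' := by simp
        add_mem' := fun {x y} hx hy => by
          simp only [Set.mem_setOf_eq] at *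
          have := map_add φ x y
          rw [hφdef, hφdef, hφdef] at this
          rw [this, hx, hy]
        zero_mem' := by simp [zero_pow (pow_ne_zero n (by omega : q ≠ 0))]
        algebraMap_mem' := fun y => by
          simp only [Set.mem_setOf_eq]
          have hy : y ^ q ^ n = y := by rw [← hq]; exact FiniteField.pow_card_pow n y
          rw [← map_pow, hy]
        inv_mem' := fun x hx => by
          simp only [Set.mem_setOf_eq] at *
          rw [inv_pow, hx] }
    have hES : E ≤ S := by
      rw [hE]
      apply IntermediateField.adjoin_le_iff.mpr
      intro x hx
      rcases hx with rfl
      exact hxi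
    -- count: q ^ d = card E ≤ number of roots of X ^ (q ^ n) - X ≤ q ^ n
    have hroots : ∀ x : E, ((x : K) ∈ ((X ^ q ^ n - X : K[X]).roots.toFinset)) := by
      intro x
      rw [Multiset.mem_toFinset, mem_roots (FiniteField.X_pow_card_pow_sub_X_ne_zero K hn hq1)]
      have hx2 : (x : K) ^ q ^ n = (x : K) := hES x.2
      simp [IsRoot, hx2]
    have hinj : Function.Injective (fun x : E => (x : K)) := Subtype.val_injective
    have hcount : q ^ d ≤ q ^ n := by
      calc q ^ d = Fintype.card E := cardE.symm
        _ = (Finset.univ.image (fun x : E => (x : K))).card := by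
            rw [Finset.card_image_of_injective _ hinj, Finset.card_univ]
        _ ≤ ((X ^ q ^ n - X : K[X]).roots.toFinset).card := by
            apply Finset.card_le_card
            intro y hy
            simp only [Finset.mem_image] at hy
            obtain ⟨x, _, rfl⟩ := hy
            exact hroots x
        _ ≤ (X ^ q ^ n - X : K[X]).roots.card := Multiset.toFinset_card_le _
        _ ≤ (X ^ q ^ n - X : K[X]).natDegree := Polynomial.card_roots' _
        _ = q ^ n := FiniteField.X_pow_card_pow_sub_X_natDegree_eq K hn hq1
    exact (Nat.pow_le_pow_iff_right hq1).mp hcount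
  -- combine with the number-theoretic lemma
  have nt := nt_lemma p hp hodd q a ha hq1 hdvd hndvd e
  set m := if a < e then p ^ (e - a) else 1 with hm
  have hm0 : m ≠ 0 := by
    rw [hm]; split_ifs
    · exact pow_ne_zero _ hp.pos.ne'
    · exact one_ne_zero
  have h1 : m ≤ d := Nat.le_of_dvd (Nat.pos_of_ne_zero hd0) ((nt d hd0).mp fact1)
  have h2 : d ≤ m := fact2 m hm0 ((nt m hm0).mpr dvd_rfl)

  omega
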